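/- For every positive integer i, let fᵢ : [1, 2i+1] → [1, 2i+1] be the continuous map determined by: fᵢ(1) = i+1, fᵢ(2) = 2i+1, fᵢ(i+1) = i+2, fᵢ(i+1+1/3) = i+1+2/3, fᵢ(i+1+2/3) = i+1+1/3, fᵢ(i+2) = i, fᵢ(2i+1) = 1, and fᵢ is linear on each of the intervals [1,2], [2, i+1], [i+1, i+1+1/3], [i+1+1/3, i+1+2/3], [i+1+2/3, i+2], and [i+2, 2i+1]. Then fᵢ has a periodic point of least period 2i+1 (indeed {1, 2, …, 2i+1} is a periodic orbit of fᵢ of least period 2i+1), but for every δ > 0, fᵢ has no nonempty δ-scrambled set that is invariant under fᵢ. -/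
import Mathlib


open Filter Set Function

/-- `limsup_{n→∞} |fⁿ(x) − fⁿ(y)|`. -/
noncomputable def limsupD (f : ℝ → ℝ) (x y : ℝ) : ℝ :=
  Filter.limsup (fun n : ℕ => |f^[n] x - f^[n] y|) Filter.atTop

/-- `liminf_{n→∞} |fⁿ(x) − fⁿ(y)|`. -/
noncomputable def liminfD (f : ℝ → ℝ) (x y : ℝ) : ℝ :=
  Filter.liminf (fun n : ℕ => |f^[n] x - f^[n] y|) Filter.atTop

/-- `p` is a periodic point of `f`. -/
def PerPt (f : ℝ → ℝ) (p : ℝ) : Prop := ∃ m : ℕ, 0 < m ∧ f^[m] p = p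

/-- `p` is a periodic point of `f` of least period `k`. -/
def LeastPeriod (f : ℝ → ℝ) (p : ℝ) (k : ℕ) : Prop :=
  f^[k] p = p ∧ ∀ i : ℕ, 0 < i → i < k → f^[i] p ≠ p

/-- `S ⊆ I` is a `δ`-scrambled set of the map `f : I → I`. -/
def ScrambledSet (f : ℝ → ℝ) (I : Set ℝ) (δ : ℝ) (S : Set ℝ) : Prop :=
  S ⊆ I ∧
  (∀ x ∈ S, ∀ y ∈ S, x ≠ y → δ ≤ limsupD f x y ∧ liminfD f x y = 0) ∧
  (∀ x ∈ S, ∀ p ∈ I, PerPt f p → δ / 2 ≤ limsupD f x p)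

/-- The ω-limit set of `x` under `f`: the set of limit points of the orbit of `x`. -/
def OmegaSet (f : ℝ → ℝ) (x : ℝ) : Set ℝ :=
  {y : ℝ | ∀ ε > 0, ∀ N : ℕ, ∃ n ≥ N, |f^[n] x - y| < ε}

/-- `x` is a recurrent point of `f`. -/
def RecPt (f : ℝ → ℝ) (x : ℝ) : Prop := x ∈ OmegaSet f x

/-- `f` is turbulent on `I`: there are closed nondegenerate subintervals `J₀, J₁` of `I`
with at most one common point with `f(J₀) ∩ f(J₁) ⊇ J₀ ∪ J₁`. -/
def Turbulent (f : ℝ → ℝ) (I : Set ℝ) : Prop :=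
  ∃ p q r s : ℝ, p < q ∧ r < s ∧ Set.Icc p q ⊆ I ∧ Set.Icc r s ⊆ I ∧
    (Set.Icc p q ∩ Set.Icc r s).Subsingleton ∧
    Set.Icc p q ∪ Set.Icc r s ⊆ f '' Set.Icc p q ∩ f '' Set.Icc r s

/-- `f` is strictly turbulent on `I`: the two intervals can be chosen disjoint. -/
def StrictlyTurbulent (f : ℝ → ℝ) (I : Set ℝ) : Prop :=
  ∃ p q r s : ℝ, p < q ∧ r < s ∧ Set.Icc p q ⊆ I ∧ Set.Icc r s ⊆ I ∧
    Disjoint (Set.Icc p q) (Set.Icc r s) ∧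
    Set.Icc p q ∪ Set.Icc r s ⊆ f '' Set.Icc p q ∩ f '' Set.Icc r s

/-- `f` is linear (affine) on the interval `[p, q]`. -/
def LinOn (f : ℝ → ℝ) (p q : ℝ) : Prop :=
  ∀ x ∈ Set.Icc p q, f x = f p + (f q - f p) / (q - p) * (x - p)
section StefanAux

variable {i : ℕ} {f : ℝ → ℝ}

/-- On `[1,2]`, `f x = i+1 + i(x-1)`. -/
lemma stefan_piece1 (v1 : f 1 = (i : ℝ) + 1) (v2 : f 2 = 2 * (i : ℝ) + 1)
    (l1 : LinOn f 1 2) {x : ℝ} (h1 : 1 ≤ x) (h2 : x ≤ 2) :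
    f x = (i:ℝ) + 1 + (i:ℝ) * (x - 1) := by
  rw [l1 x ⟨h1, h2⟩, v1, v2]; ring

/-- On `[2, i+1]`, `f x = 2i+3-x`. -/
lemma stefan_pieceA (v2 : f 2 = 2 * (i : ℝ) + 1) (v3 : f ((i : ℝ) + 1) = (i : ℝ) + 2)
    (l2 : LinOn f 2 ((i : ℝ) + 1)) {x : ℝ} (h1 : 2 ≤ x) (h2 : x ≤ (i:ℝ)+1) :
    f x = 2*(i:ℝ) + 3 - x := by
  by_cases hA : 2 ≤ i
  · have hne : (i:ℝ) + 1 - 2 ≠ 0 := by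
      have : (2:ℝ) ≤ i := by exact_mod_cast hA
      intro h; linarith
    rw [l2 x ⟨h1, h2⟩, v2, v3, show ((i:ℝ)+2 - (2*(i:ℝ)+1)) / ((i:ℝ)+1-2) = -1 from by
      rw [div_eq_iff hne]; ring]
    ring
  · have hle : (i:ℝ) ≤ 1 := by exact_mod_cast Nat.lt_succ_iff.mp (by omega)
    have hx : x = 2 := by linarith
    rw [hx, v2]; ring

/-- On `[i+1, i+1+1/3]`, `f x = 2i+3-x`. -/
lemma stefan_piece3 (v3 : f ((i : ℝ) + 1) = (i : ℝ) + 2)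
    (v4 : f ((i : ℝ) + 1 + 1/3) = (i : ℝ) + 1 + 2/3)
    (l3 : LinOn f ((i : ℝ) + 1) ((i : ℝ) + 1 + 1/3)) {x : ℝ}
    (h1 : (i:ℝ)+1 ≤ x) (h2 : x ≤ (i:ℝ)+1+1/3) :
    f x = 2*(i:ℝ) + 3 - x := by
  rw [l3 x ⟨h1, h2⟩, v3, v4]; ring

/-- On the middle third `[i+1+1/3, i+1+2/3]`, `f x = 2i+3-x`. -/
lemma stefan_pieceM (v4 : f ((i : ℝ) + 1 + 1/3) = (i : ℝ) + 1 + 2/3)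
    (v5 : f ((i : ℝ) + 1 + 2/3) = (i : ℝ) + 1 + 1/3)
    (l4 : LinOn f ((i : ℝ) + 1 + 1/3) ((i : ℝ) + 1 + 2/3)) {x : ℝ}
    (h1 : (i:ℝ)+1+1/3 ≤ x) (h2 : x ≤ (i:ℝ)+1+2/3) :
    f x = 2*(i:ℝ) + 3 - x := by
  rw [l4 x ⟨h1, h2⟩, v4, v5]; ring

/-- On `[i+1+2/3, i+2]`, `f x = 5i+8-4x`. -/
lemma stefan_piece5 (v5 : f ((i : ℝ) + 1 + 2/3) = (i : ℝ) + 1 + 1/3)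
    (v6 : f ((i : ℝ) + 2) = (i : ℝ))
    (l5 : LinOn f ((i : ℝ) + 1 + 2/3) ((i : ℝ) + 2)) {x : ℝ}
    (h1 : (i:ℝ)+1+2/3 ≤ x) (h2 : x ≤ (i:ℝ)+2) :
    f x = 5*(i:ℝ) + 8 - 4*x := by
  rw [l5 x ⟨h1, h2⟩, v5, v6]; ring

/-- On `[i+2, 2i+1]`, `f x = 2i+2-x`. -/
lemma stefan_pieceB (v6 : f ((i : ℝ) + 2) = (i : ℝ)) (v7 : f (2 * (i : ℝ) + 1) = 1)
    (l6 : LinOn f ((i : ℝ) + 2) (2 * (i : ℝ) + 1)) {x : ℝ}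
    (h1 : (i:ℝ)+2 ≤ x) (h2 : x ≤ 2*(i:ℝ)+1) :
    f x = 2*(i:ℝ) + 2 - x := by
  by_cases hA : 2 ≤ i
  · have hne : 2*(i:ℝ) + 1 - ((i:ℝ)+2) ≠ 0 := by
      have : (2:ℝ) ≤ i := by exact_mod_cast hA
      intro h; linarith
    rw [l6 x ⟨h1, h2⟩, v6, v7, show (1 - (i:ℝ)) / (2*(i:ℝ)+1 - ((i:ℝ)+2)) = -1 from by
      rw [div_eq_iff hne]; ring]
    ring
  · have hle : (i:ℝ) ≤ 1 := by exact_mod_cast Nat.lt_succ_iff.mp (by omega)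
    have hx : x = (i:ℝ) + 2 := by linarith
    rw [hx, v6]; linarith

end StefanAux
section StefanAux2

variable {i : ℕ} {f : ℝ → ℝ}

/-- If `y ∈ [1, 2i+1]` and `|f y - y| < 1/3`, then `y` lies in the middle third
`[i+1+1/3, i+1+2/3]`. -/
lemma stefan_gap (hi : 0 < i)
    (p1 : ∀ x:ℝ, 1 ≤ x → x ≤ 2 → f x = (i:ℝ)+1+(i:ℝ)*(x-1))
    (pA : ∀ x:ℝ, 2 ≤ x → x ≤ (i:ℝ)+1 → f x = 2*(i:ℝ)+3-x)
    (p3 : ∀ x:ℝ, (i:ℝ)+1 ≤ x → x ≤ (i:ℝ)+1+1/3 → f x = 2*(i:ℝ)+3-x)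
    (p5 : ∀ x:ℝ, (i:ℝ)+1+2/3 ≤ x → x ≤ (i:ℝ)+2 → f x = 5*(i:ℝ)+8-4*x)
    (pB : ∀ x:ℝ, (i:ℝ)+2 ≤ x → x ≤ 2*(i:ℝ)+1 → f x = 2*(i:ℝ)+2-x)
    {y : ℝ} (h1 : 1 ≤ y) (h2 : y ≤ 2*(i:ℝ)+1) (h13 : |f y - y| < 1/3) :
    (i:ℝ)+1+1/3 ≤ y ∧ y ≤ (i:ℝ)+1+2/3 := by
  have hi1 : (1:ℝ) ≤ (i:ℝ) := by exact_mod_cast hi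
  obtain ⟨hl, hr⟩ := abs_lt.mp h13
  rcases le_total y 2 with hc | hc
  · exfalso
    have := p1 y h1 hc
    nlinarith [mul_nonneg (sub_nonneg.2 hi1) (sub_nonneg.2 h1)]
  rcases le_total y ((i:ℝ)+1) with hc2 | hc2
  · exfalso; have := pA y hc hc2; linarith
  rcases le_total y ((i:ℝ)+1+1/3) with hc3 | hc3
  · exfalso; have := p3 y hc2 hc3; linarith
  rcases le_total y ((i:ℝ)+1+2/3) with hc4 | hc4
  · exact ⟨hc3, hc4⟩
  rcases le_total y ((i:ℝ)+2) with hc5 | hc5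
  · exfalso; have := p5 y hc4 hc5; linarith
  · exfalso; have := pB y hc5 h2; linarith

/-- Every point of the middle third is periodic with period 2. -/
lemma stefan_mid
    (pM : ∀ x:ℝ, (i:ℝ)+1+1/3 ≤ x → x ≤ (i:ℝ)+1+2/3 → f x = 2*(i:ℝ)+3-x)
    {y : ℝ} (h1 : (i:ℝ)+1+1/3 ≤ y) (h2 : y ≤ (i:ℝ)+1+2/3) :
    f (f y) = y := by
  rw [pM y h1 h2, pM (2*(i:ℝ)+3-y) (by linarith) (by linarith)]; ring

end StefanAux2

/-- Remark 2 of the paper. For every positive integer `i`, the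
piecewise linear map `fᵢ : [1, 2i+1] → [1, 2i+1]` described in the paper has
`{1, 2, …, 2i+1}` as a periodic orbit of least period `2i+1`, but has no nonempty
invariant `δ`-scrambled set for any `δ > 0`. -/
theorem stefan_period_without_invariant_scrambled_set
    (i : ℕ) (hi : 0 < i) (f : ℝ → ℝ)
    (v1 : f 1 = (i : ℝ) + 1)
    (v2 : f 2 = 2 * (i : ℝ) + 1)
    (v3 : f ((i : ℝ) + 1) = (i : ℝ) + 2)
    (v4 : f ((i : ℝ) + 1 + 1/3) = (i : ℝ) + 1 + 2/3)
    (v5 : f ((i : ℝ) + 1 + 2/3) = (i : ℝ) + 1 + 1/3)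
    (v6 : f ((i : ℝ) + 2) = (i : ℝ))
    (v7 : f (2 * (i : ℝ) + 1) = 1)
    (l1 : LinOn f 1 2)
    (l2 : LinOn f 2 ((i : ℝ) + 1))
    (l3 : LinOn f ((i : ℝ) + 1) ((i : ℝ) + 1 + 1/3))
    (l4 : LinOn f ((i : ℝ) + 1 + 1/3) ((i : ℝ) + 1 + 2/3))
    (l5 : LinOn f ((i : ℝ) + 1 + 2/3) ((i : ℝ) + 2))
    (l6 : LinOn f ((i : ℝ) + 2) (2 * (i : ℝ) + 1)) :
    (LeastPeriod f 1 (2 * i + 1) ∧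
      {x : ℝ | ∃ j : ℕ, 1 ≤ j ∧ j ≤ 2 * i + 1 ∧ x = (j : ℝ)} =
        {y : ℝ | ∃ n : ℕ, f^[n] 1 = y}) ∧
    ∀ δ > 0, ∀ S : Set ℝ,
      ScrambledSet f (Set.Icc 1 (2 * (i : ℝ) + 1)) δ S → Set.MapsTo f S S → S = ∅ := by
  have hi1 : (1:ℝ) ≤ (i:ℝ) := by exact_mod_cast hi
  -- the orbit of 1 through the integers
  have key : ∀ k : ℕ, k < i →
      f^[2*k+1] 1 = (i:ℝ)+1-(k:ℝ) ∧ f^[2*k+2] 1 = (i:ℝ)+2+(k:ℝ) := by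
    intro k
    induction k with
    | zero =>
      intro _
      have e1 : f^[2*0+1] 1 = (i:ℝ)+1 := by
        simpa using v1
      refine ⟨by simpa using e1, ?_⟩
      have : (2*0+2 : ℕ) = (2*0+1) + 1 := rfl
      rw [this, Function.iterate_succ_apply', e1, v3]
      norm_num
    | succ k ih =>
      intro hk1
      obtain ⟨ih1, ih2⟩ := ih (Nat.lt_of_succ_lt hk1)
      have hk2 : (k:ℝ) + 2 ≤ (i:ℝ) := by exact_mod_cast Nat.succ_le_of_lt hk1
      have p1 : f^[2*(k+1)+1] 1 = (i:ℝ)+1-((k:ℝ)+1) := by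
        have e : 2*(k+1)+1 = (2*k+2) + 1 := by ring
        rw [e, Function.iterate_succ_apply', ih2,
          stefan_pieceB v6 v7 l6 (by linarith) (by linarith)]
        ring
      have p2 : f^[2*(k+1)+2] 1 = (i:ℝ)+2+((k:ℝ)+1) := by
        have e : 2*(k+1)+2 = (2*(k+1)+1) + 1 := rfl
        rw [e, Function.iterate_succ_apply', p1,
          stefan_pieceA v2 v3 l2 (by linarith) (by linarith)]
        ring
      exact ⟨by push_cast; exact p1, by push_cast; exact p2⟩
  -- period 2i+1
  have h2i : f^[2*i] 1 = 2*(i:ℝ)+1 := by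
    obtain ⟨_, h⟩ := key (i-1) (by omega)
    have e : 2*(i-1)+2 = 2*i := by omega
    rw [e] at h
    rw [h, Nat.cast_sub hi]
    ring
  have per : f^[2*i+1] 1 = 1 := by
    rw [Function.iterate_succ_apply', h2i, v7]
  refine ⟨⟨⟨per, ?_⟩, ?_⟩, ?_⟩
  · -- least period
    intro n hn0 hnlt
    rcases Nat.even_or_odd n with ⟨k, hk⟩ | ⟨k, hk⟩
    · obtain ⟨l, rfl⟩ : ∃ l, k = l + 1 := ⟨k - 1, by omega⟩
      have hl : l < i := by omega
      rw [show n = 2*l+2 by omega, (key l hl).2]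
      have : (0:ℝ) ≤ (l:ℝ) := Nat.cast_nonneg l
      intro h; linarith
    · have hk' : k < i := by omega
      rw [show n = 2*k+1 by omega, (key k hk').1]
      have : (k:ℝ) < (i:ℝ) := by exact_mod_cast hk'
      intro h; linarith
  · -- orbit set equality
    ext x
    simp only [Set.mem_setOf_eq]
    constructor
    · rintro ⟨j, hj1, hj2, rfl⟩
      by_cases hj0 : j = 1
      · exact ⟨0, by simp [hj0]⟩
      by_cases hj : j ≤ i + 1
      · refine ⟨2*(i+1-j)+1, ?_⟩
        rw [(key (i+1-j) (by omega)).1, Nat.cast_sub (by omega)]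
        push_cast; ring
      · refine ⟨2*(j-(i+2))+2, ?_⟩
        rw [(key (j-(i+2)) (by omega)).2, Nat.cast_sub (by omega)]
        push_cast; ring
    · rintro ⟨n, rfl⟩
      have hper : Function.IsPeriodicPt f (2*i+1) 1 := per
      rw [← hper.iterate_mod_apply n]
      have hmlt : n % (2*i+1) < 2*i+1 := Nat.mod_lt _ (by omega)
      rcases Nat.even_or_odd (n % (2*i+1)) with ⟨k, hk⟩ | ⟨k, hk⟩
      · rcases Nat.eq_zero_or_pos k with rfl | hkpos
        · refine ⟨1, le_refl _, by omega, ?_⟩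
          rw [show n % (2*i+1) = 0 by omega]
          simp
        · obtain ⟨l, rfl⟩ : ∃ l, k = l + 1 := ⟨k - 1, by omega⟩
          refine ⟨i+2+l, by omega, by omega, ?_⟩
          rw [show n % (2*i+1) = 2*l+2 by omega, (key l (by omega)).2]
          push_cast; ring
      · refine ⟨i+1-k, by omega, by omega, ?_⟩
        rw [show n % (2*i+1) = 2*k+1 by omega, (key k (by omega)).1,
          Nat.cast_sub (by omega)]
        push_cast; ring
  · -- no invariant scrambled set
    intro δ hδ S hS hinv
    obtain ⟨hSI, hpair, hper'⟩ := hS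
    by_contra hne
    rw [← Ne, ← Set.nonempty_iff_ne_empty] at hne
    obtain ⟨x, hx⟩ := hne
    have noper : ∀ p ∈ S, ¬ PerPt f p := by
      intro p hp hpp
      have h := hper' p hp p (hSI hp) hpp
      have hz : limsupD f p p = 0 := by
        unfold limsupD
        simp [Filter.limsup_const]
      rw [hz] at h
      linarith
    by_cases hfx : f x = x
    · exact noper x hx ⟨1, one_pos, by simpa using hfx⟩
    have hfxS : f x ∈ S := hinv hx
    have hlim : liminfD f x (f x) = 0 := (hpair x hx (f x) hfxS (Ne.symm hfx)).2
    have hbd : ∀ n : ℕ, |f^[n] x - f^[n] (f x)| ≤ 2*(i:ℝ) := by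
      intro n
      obtain ⟨ha1, ha2⟩ := hSI (hinv.iterate n hx)
      obtain ⟨hb1, hb2⟩ := hSI (hinv.iterate n hfxS)
      rw [abs_le]
      constructor <;> linarith
    have hfreq : ∃ᶠ n in Filter.atTop, |f^[n] x - f^[n] (f x)| < 1/3 := by
      apply Filter.frequently_lt_of_liminf_lt
      · exact Filter.isCoboundedUnder_ge_of_le Filter.atTop hbd
      · unfold liminfD at hlim
        rw [hlim]; norm_num
    obtain ⟨n, hn⟩ := hfreq.exists
    set y := f^[n] x with hy
    have hyS : y ∈ S := hinv.iterate n hx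
    obtain ⟨hy1, hy2⟩ := hSI hyS
    have hfy : f^[n] (f x) = f y := by
      rw [hy, ← Function.iterate_succ_apply, Function.iterate_succ_apply']
    have h13 : |f y - y| < 1/3 := by
      rw [← hfy, abs_sub_comm]; exact hn
    have pgap := stefan_gap hi
      (fun z hz1 hz2 => stefan_piece1 v1 v2 l1 hz1 hz2)
      (fun z hz1 hz2 => stefan_pieceA v2 v3 l2 hz1 hz2)
      (fun z hz1 hz2 => stefan_piece3 v3 v4 l3 hz1 hz2)
      (fun z hz1 hz2 => stefan_piece5 v5 v6 l5 hz1 hz2)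
      (fun z hz1 hz2 => stefan_pieceB v6 v7 l6 hz1 hz2)
      hy1 hy2 h13
    have hmid := stefan_mid (fun z hz1 hz2 => stefan_pieceM v4 v5 l4 hz1 hz2)
      pgap.1 pgap.2
    exact noper y hyS ⟨2, by norm_num, by simpa [Function.iterate_succ_apply'] using hmid⟩
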